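/- Let 0 → H → G → G/H → 0 be an exact sequence of groups, k an algebraically closed field, and ρ: G → GL(V), σ: G → GL(W) finite-dimensional representations over k such that the restrictions ρ|_H and σ|_H are irreducible and isomorphic as H-representations. Then there exists a character (one-dimensional representation) χ of G/H such that σ ≅ ρ ⊗ (χ ∘ b), where b: G → G/H is the quotient map. -/

import Mathlib

/-- Clifford-theory lemma: if `ρ : G → GL(V)` and `σ : G → GL(W)` are finite-dimensional
representations over an algebraically closed field whose restrictions to a normal subgroup `H`
are irreducible and isomorphic, then `σ ≅ ρ ⊗ χ` for some character `χ` of `G/H`. -/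
theorem stmt11 (k : Type*) [Field k] [IsAlgClosed k]
    (G : Type*) [Group G] (H : Subgroup G) [H.Normal]
    (V W : Type*) [AddCommGroup V] [Module k V] [AddCommGroup W] [Module k W]
    [FiniteDimensional k V] [FiniteDimensional k W]
    (ρ : G →* (V →ₗ[k] V)) (σ : G →* (W →ₗ[k] W))
    -- the restriction of `ρ` to `H` is irreducible
    (hρ : Nontrivial V ∧ ∀ U : Submodule k V, (∀ h ∈ H, ∀ v ∈ U, ρ h v ∈ U) → U = ⊥ ∨ U = ⊤)
    -- the restriction of `σ` to `H` is irreducible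
    (hσ : Nontrivial W ∧ ∀ U : Submodule k W, (∀ h ∈ H, ∀ w ∈ U, σ h w ∈ U) → U = ⊥ ∨ U = ⊤)
    -- the restrictions to `H` are isomorphic as `H`-representations
    (e : V ≃ₗ[k] W) (he : ∀ h ∈ H, ∀ v, e (ρ h v) = σ h (e v)) :
    ∃ (χ : G ⧸ H →* kˣ) (f : V ≃ₗ[k] W),
      ∀ g v, σ g (f v) = (χ (QuotientGroup.mk g) : k) • f (ρ g v) := by
  obtain ⟨hV, hIrr⟩ := hρ
  -- cancellation facts
  have ρcan : ∀ (g : G) (v : V), ρ g (ρ g⁻¹ v) = v := by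
    intro g v
    rw [← Module.End.mul_apply, ← map_mul, mul_inv_cancel, map_one, Module.End.one_apply]
  have σcan : ∀ (g : G) (w : W), σ g⁻¹ (σ g w) = w := by
    intro g w
    rw [← Module.End.mul_apply, ← map_mul, inv_mul_cancel, map_one, Module.End.one_apply]
  have ρmul : ∀ (a b : G) (v : V), ρ (a * b) v = ρ a (ρ b v) := by
    intro a b v; rw [map_mul, Module.End.mul_apply]
  have σmul : ∀ (a b : G) (w : W), σ (a * b) w = σ a (σ b w) := by
    intro a b w; rw [map_mul, Module.End.mul_apply]
  have esymm : ∀ h ∈ H, ∀ w, e.symm (σ h w) = ρ h (e.symm w) := by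
    intro h hh w
    apply e.injective
    rw [he h hh, e.apply_symm_apply, e.apply_symm_apply]
  -- Schur: an H-equivariant endomorphism of V is scalar
  have schur : ∀ u : V →ₗ[k] V, (∀ h ∈ H, ∀ v, u (ρ h v) = ρ h (u v)) →
      ∃ c : k, ∀ v, u v = c • v := by
    intro u hu
    obtain ⟨c, hc⟩ := Module.End.exists_eigenvalue u
    refine ⟨c, ?_⟩
    have hinv : ∀ h ∈ H, ∀ v ∈ Module.End.eigenspace u c, u ((ρ h) v) = c • (ρ h) v := by
      intro h hh v hv
      rw [Module.End.mem_eigenspace_iff] at hv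
      rw [hu h hh, hv, map_smul]
    have hU : Module.End.eigenspace u c = ⊤ := by
      rcases hIrr (Module.End.eigenspace u c) (fun h hh v hv => by
        rw [Module.End.mem_eigenspace_iff]; exact hinv h hh v hv) with h | h
      · exact absurd h hc
      · exact h
    intro v
    have : v ∈ Module.End.eigenspace u c := hU ▸ Submodule.mem_top
    rwa [Module.End.mem_eigenspace_iff] at this
  -- scalar c g for each g
  have hcex : ∀ g : G, ∃ c : k, ∀ v, ρ g⁻¹ (e.symm (σ g (e v))) = c • v := by
    intro g
    have heq : ∀ h ∈ H, ∀ v, ((ρ g⁻¹) ∘ₗ (e.symm.toLinearMap ∘ₗ ((σ g) ∘ₗ (e : V →ₗ[k] W))))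
        ((ρ h) v) = (ρ h) (((ρ g⁻¹) ∘ₗ (e.symm.toLinearMap ∘ₗ ((σ g) ∘ₗ (e : V →ₗ[k] W)))) v) := by
      intro h hh v
      simp only [LinearMap.comp_apply, LinearEquiv.coe_coe]
      have hgH : g * h * g⁻¹ ∈ H := Subgroup.Normal.conj_mem ‹H.Normal› h hh g
      calc ρ g⁻¹ (e.symm (σ g (e (ρ h v))))
          = ρ g⁻¹ (e.symm (σ g (σ h (e v)))) := by rw [he h hh]
        _ = ρ g⁻¹ (e.symm (σ (g * h * g⁻¹) (σ g (e v)))) := by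
            have harg : g * h = g * h * g⁻¹ * g := by group
            conv_lhs => rw [← σmul, harg, σmul]
        _ = ρ g⁻¹ (ρ (g * h * g⁻¹) (e.symm (σ g (e v)))) := by rw [esymm _ hgH]
        _ = ρ h (ρ g⁻¹ (e.symm (σ g (e v)))) := by
            have harg : g⁻¹ * (g * h * g⁻¹) = h * g⁻¹ := by group
            conv_lhs => rw [← ρmul, harg, ρmul]
    obtain ⟨c, hc⟩ := schur _ heq
    exact ⟨c, fun v => by simpa using hc v⟩
  choose c hc using hcex
  -- key relation
  have key : ∀ (g : G) (v : V), σ g (e v) = c g • e (ρ g v) := by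
    intro g v
    have h1 := hc g v
    have h2 : e.symm (σ g (e v)) = c g • ρ g v := by
      have := congrArg (ρ g) h1
      rw [ρcan, map_smul] at this
      exact this
    have := congrArg e h2
    rwa [e.apply_symm_apply, map_smul] at this
  obtain ⟨v0, hv0⟩ := exists_ne (0 : V)
  have hw0 : ∀ g : G, e (ρ g v0) ≠ 0 := by
    intro g hzero
    have : ρ g v0 = 0 := by
      apply e.injective; simp [hzero]
    apply hv0
    have := congrArg (ρ g⁻¹) this
    rw [← Module.End.mul_apply, ← map_mul, inv_mul_cancel, map_one, Module.End.one_apply,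
      map_zero] at this
    exact this
  -- c is nonvanishing
  have hne : ∀ g : G, c g ≠ 0 := by
    intro g hzero
    have h1 := key g v0
    rw [hzero, zero_smul] at h1
    have : e v0 = 0 := by
      have := congrArg (σ g⁻¹) h1
      rw [σcan, map_zero] at this
      exact this
    exact hv0 (by simpa using e.injective (by simp [this]))
  -- c is multiplicative
  have hmulc : ∀ a b : G, c (a * b) = c a * c b := by
    intro a b
    have h1 : σ (a * b) (e v0) = (c a * c b) • e (ρ (a * b) v0) := by
      calc σ (a * b) (e v0) = σ a (σ b (e v0)) := σmul a b _
        _ = σ a (c b • e (ρ b v0)) := by rw [key b v0]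
        _ = c b • σ a (e (ρ b v0)) := map_smul _ _ _
        _ = c b • (c a • e (ρ a (ρ b v0))) := by rw [key a (ρ b v0)]
        _ = (c a * c b) • e (ρ (a * b) v0) := by
            rw [ρmul, smul_smul, mul_comm]
    have h2 := key (a * b) v0
    have := h2.symm.trans h1
    exact smul_left_injective k (hw0 (a * b)) this
  have hone : c 1 = 1 := by
    have h11 := hmulc 1 1
    rw [one_mul] at h11
    have h12 : c 1 * 1 = c 1 * c 1 := by rw [mul_one]; exact h11
    exact (mul_left_cancel₀ (hne 1) h12).symm
  -- c is trivial on H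
  have hHc : ∀ h ∈ H, c h = 1 := by
    intro h hh
    have h1 : σ h (e v0) = (1 : k) • e (ρ h v0) := by
      rw [one_smul, he h hh]
    exact smul_left_injective k (hw0 h) ((key h v0).symm.trans h1)
  -- build the character
  let d : G →* kˣ :=
    { toFun := fun g => Units.mk0 (c g) (hne g)
      map_one' := Units.ext (by simp [hone])
      map_mul' := fun a b => Units.ext (by simp [hmulc a b]) }
  refine ⟨QuotientGroup.lift H d (fun h hh => MonoidHom.mem_ker.mpr (Units.ext (by simp [d, hHc h hh]))), e, ?_⟩
  intro g v
  simpa [d] using key g v
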